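/- M^[2](1, n) = ⌈n/2⌉ for every n ≥ 3. -/

import Mathlib

/-- An adaptive group-testing strategy on a population of `n` items:
a binary decision tree whose internal nodes test a subset (branching on
contaminated / pure) and whose leaves output a guess for the defective set. -/
inductive GTTree (n : ℕ) : Type where
  | leaf (guess : Finset (Fin n)) : GTTree n
  | node (test : Finset (Fin n)) (pos neg : GTTree n) : GTTree n

/-- Run the strategy when the true defective set is `D`. -/
def GTTree.run {n : ℕ} (D : Finset (Fin n)) : GTTree n → Finset (Fin n)
  | .leaf g => g
  | .node t p q => if (t ∩ D).Nonempty then p.run D else q.run D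

/-- Worst-case number of tests performed by the strategy. -/
def GTTree.depth {n : ℕ} : GTTree n → ℕ
  | .leaf _ => 0
  | .node _ p q => max p.depth q.depth + 1

/-- The strategy correctly identifies every possible defective set of size `d`. -/
def GTTree.Solves {n : ℕ} (T : GTTree n) (d : ℕ) : Prop :=
  ∀ D : Finset (Fin n), D.card = d → T.run D = D

/-- Every test set occurring in the tree has size exactly `k`. -/
def GTTree.SizeK {n : ℕ} (k : ℕ) : GTTree n → Prop
  | .leaf _ => True
  | .node t p q => t.card = k ∧ p.SizeK k ∧ q.SizeK k

/-- `M d n`: optimal worst-case number of adaptive tests to find the `d`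
defectives among `n` items, test sets of arbitrary size (`⊤` if unsolvable). -/
noncomputable def M (d n : ℕ) : ℕ∞ :=
  sInf {c : ℕ∞ | ∃ T : GTTree n, T.Solves d ∧ (T.depth : ℕ∞) = c}

/-- `Mfix k d n`: optimal worst-case number of adaptive tests to find the `d`
defectives among `n` items, every test set of size exactly `k` (`⊤` if unsolvable). -/
noncomputable def Mfix (k d n : ℕ) : ℕ∞ :=
  sInf {c : ℕ∞ | ∃ T : GTTree n, T.SizeK k ∧ T.Solves d ∧ (T.depth : ℕ∞) = c}

def build (n : ℕ) (i : ℕ) : GTTree n :=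
  if h : i + 2 < n then
    GTTree.node {⟨i, by omega⟩, ⟨i+1, by omega⟩}
      (GTTree.node {⟨i, by omega⟩, ⟨i+2, by omega⟩}
        (.leaf {⟨i, by omega⟩}) (.leaf {⟨i+1, by omega⟩}))
      (build n (i+2))
  else if h1 : i + 2 = n then
    GTTree.node {⟨i, by omega⟩, ⟨0, by omega⟩} (.leaf {⟨i, by omega⟩}) (.leaf {⟨i+1, by omega⟩})
  else if h2 : i + 1 = n then .leaf {⟨i, by omega⟩}
  else .leaf ∅
termination_by n - i

theorem depth_build (n i : ℕ) : (build n i).depth = if i + 2 ≤ n then (n - i + 1)/2 else 0 := by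
  rw [build]
  split
  · rename_i h
    have ih := depth_build n (i+2)
    simp only [GTTree.depth, ih]
    split_ifs <;> omega
  · split
    · simp only [GTTree.depth]; split_ifs <;> omega
    · split <;> · simp only [GTTree.depth]; split_ifs <;> omega
termination_by n - i

theorem inter_single {n : ℕ} (t : Finset (Fin n)) (j : Fin n) :
    (t ∩ {j}).Nonempty ↔ j ∈ t := by
  constructor
  · rintro ⟨x, hx⟩
    simp only [Finset.mem_inter, Finset.mem_singleton] at hx
    rcases hx with ⟨h1, rfl⟩; exact h1
  · intro h; exact ⟨j, by simp [h]⟩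

theorem run_build (n : ℕ) (i : ℕ) (j : Fin n) (hj : i ≤ j.val) :
    (build n i).run {j} = {j} := by
  rw [build]
  split
  · rename_i h
    rw [GTTree.run]
    by_cases hc : j.val = i ∨ j.val = i + 1
    · rw [if_pos]
      · rw [GTTree.run]
        by_cases hji : j.val = i
        · rw [if_pos]
          · simp only [GTTree.run, Finset.singleton_inj, Fin.ext_iff, Fin.val_mk]; omega
          · rw [inter_single]
            simp only [Finset.mem_insert, Finset.mem_singleton, Fin.ext_iff, Fin.val_mk]
            omega
        · rw [if_neg]
          · simp only [GTTree.run, Finset.singleton_inj, Fin.ext_iff, Fin.val_mk]; omega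
          · rw [inter_single]
            simp only [Finset.mem_insert, Finset.mem_singleton, Fin.ext_iff, Fin.val_mk]
            omega
      · rw [inter_single]
        simp only [Finset.mem_insert, Finset.mem_singleton, Fin.ext_iff, Fin.val_mk]
        omega
    · rw [if_neg]
      · exact run_build n (i+2) j (by omega)
      · rw [inter_single]
        simp only [Finset.mem_insert, Finset.mem_singleton, Fin.ext_iff, Fin.val_mk]
        omega
  · split
    · rename_i h h1
      have hjc : j.val = i ∨ j.val = i + 1 := by omega
      rw [GTTree.run]
      by_cases hji : j.val = i
      · rw [if_pos]
        · simp only [GTTree.run, Finset.singleton_inj, Fin.ext_iff, Fin.val_mk]; omega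
        · rw [inter_single]
          simp only [Finset.mem_insert, Finset.mem_singleton, Fin.ext_iff, Fin.val_mk]
          omega
      · rw [if_neg]
        · simp only [GTTree.run, Finset.singleton_inj, Fin.ext_iff, Fin.val_mk]; omega
        · rw [inter_single]
          simp only [Finset.mem_insert, Finset.mem_singleton, Fin.ext_iff, Fin.val_mk]
          omega
    · split
      · rename_i h h1 h2
        simp only [GTTree.run, Finset.singleton_inj, Fin.ext_iff, Fin.val_mk]
        omega
      · rename_i h h1 h2
        exact absurd j.isLt (by omega)
termination_by n - i

theorem sizeK_build (n : ℕ) (hn : 3 ≤ n) (i : ℕ) : (build n i).SizeK 2 := by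
  rw [build]
  split
  · rename_i h
    refine ⟨?_, ⟨?_, trivial, trivial⟩, sizeK_build n hn (i+2)⟩
    · rw [Finset.card_pair]
      simp only [ne_eq, Fin.ext_iff, Fin.val_mk]; omega
    · rw [Finset.card_pair]
      simp only [ne_eq, Fin.ext_iff, Fin.val_mk]; omega
  · split
    · rename_i h h1
      refine ⟨?_, trivial, trivial⟩
      rw [Finset.card_pair]
      simp only [ne_eq, Fin.ext_iff, Fin.val_mk]; omega
    · split
      · trivial
      · trivial
termination_by n - i

theorem count_le {n : ℕ} (T : GTTree n) (hK : T.SizeK 2) :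
    (Finset.univ.filter fun i : Fin n => T.run {i} = {i}).card ≤ max 1 (2 * T.depth) := by
  induction T with
  | leaf g =>
    simp only [GTTree.depth, Nat.mul_zero, Nat.max_self]
    have : (Finset.univ.filter fun i : Fin n => (GTTree.leaf (n := n) g).run {i} = {i}).card ≤ 1 := by
      apply Finset.card_le_one.mpr
      intro a ha b hb
      rw [Finset.mem_filter] at ha hb
      simp only [GTTree.run] at ha hb
      exact Finset.singleton_inj.mp (ha.2.symm.trans hb.2)
    omega
  | node t p q ihp ihq =>
    obtain ⟨ht, hp, hq⟩ := hK
    have hip := ihp hp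
    have hiq := ihq hq
    have hsub : (Finset.univ.filter fun i : Fin n => (GTTree.node t p q).run {i} = {i}) ⊆
        ((Finset.univ.filter fun i : Fin n => p.run {i} = {i}) ∩ t) ∪
        ((Finset.univ.filter fun i : Fin n => q.run {i} = {i}) \ t) := by
      intro a ha
      rw [Finset.mem_filter] at ha
      simp only [GTTree.run] at ha
      by_cases hat : a ∈ t
      · rw [if_pos ((inter_single t a).mpr hat)] at ha
        exact Finset.mem_union_left _ (Finset.mem_inter.mpr
          ⟨Finset.mem_filter.mpr ⟨Finset.mem_univ _, ha.2⟩, hat⟩)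
      · rw [if_neg (fun hc => hat ((inter_single t a).mp hc))] at ha
        exact Finset.mem_union_right _ (Finset.mem_sdiff.mpr
          ⟨Finset.mem_filter.mpr ⟨Finset.mem_univ _, ha.2⟩, hat⟩)
    have h1 := Finset.card_le_card hsub
    have h2 := Finset.card_union_le ((Finset.univ.filter fun i : Fin n => p.run {i} = {i}) ∩ t)
        ((Finset.univ.filter fun i : Fin n => q.run {i} = {i}) \ t)
    have h3 : ((Finset.univ.filter fun i : Fin n => p.run {i} = {i}) ∩ t).card ≤ 2 := by
      calc _ ≤ t.card := Finset.card_le_card Finset.inter_subset_right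
      _ = 2 := ht
    have h3' : ((Finset.univ.filter fun i : Fin n => p.run {i} = {i}) ∩ t).card ≤
        (Finset.univ.filter fun i : Fin n => p.run {i} = {i}).card :=
      Finset.card_le_card Finset.inter_subset_left
    have h4 : ((Finset.univ.filter fun i : Fin n => q.run {i} = {i}) \ t).card ≤
        (Finset.univ.filter fun i : Fin n => q.run {i} = {i}).card :=
      Finset.card_le_card Finset.sdiff_subset
    simp only [GTTree.depth]
    omega

theorem ceil_half (n : ℕ) (hn : 3 ≤ n) : ⌈(n : ℚ) / 2⌉₊ = (n + 1) / 2 := by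
  set m := (n + 1) / 2 with hm
  have hm1 : 1 ≤ m := by omega
  have hA : n ≤ 2 * m := by omega
  have hB : 2 * m ≤ n + 1 := by omega
  have hAq : (n : ℚ) ≤ 2 * m := by exact_mod_cast hA
  have hBq : 2 * (m : ℚ) ≤ n + 1 := by exact_mod_cast hB
  rw [Nat.ceil_eq_iff (by omega)]
  constructor
  · rw [Nat.cast_sub hm1, lt_div_iff₀ (by norm_num : (0:ℚ) < 2)]
    push_cast
    linarith
  · rw [div_le_iff₀ (by norm_num : (0:ℚ) < 2)]
    linarith

theorem stmt13 (n : ℕ) (hn : 3 ≤ n) : Mfix 2 1 n = ((⌈(n : ℚ) / 2⌉₊ : ℕ) : ℕ∞) := by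
  rw [ceil_half n hn]
  unfold Mfix
  apply le_antisymm
  · apply sInf_le
    refine ⟨build n 0, sizeK_build n hn 0, ?_, ?_⟩
    · intro D hD
      obtain ⟨j, rfl⟩ := Finset.card_eq_one.mp hD
      exact run_build n 0 j (Nat.zero_le _)
    · rw [depth_build]
      have : (if 0 + 2 ≤ n then (n - 0 + 1)/2 else 0) = (n + 1)/2 := by split_ifs <;> omega
      rw [this]
  · apply le_sInf
    rintro c ⟨T, hK, hS, rfl⟩
    have h1 := count_le T hK
    have h2 : (Finset.univ.filter fun i : Fin n => T.run {i} = {i}) = Finset.univ := by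
      ext a
      simp only [Finset.mem_filter, Finset.mem_univ, true_and, iff_true]
      exact hS {a} (Finset.card_singleton a)
    rw [h2, Finset.card_univ, Fintype.card_fin] at h1
    have h3 : (n + 1) / 2 ≤ T.depth := by omega
    exact_mod_cast h3
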